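/- Let D be a division ring and (R, C) a solution of the non-commutative (1,4)-system with commutator C; set u_n := R_{2n} and K := ((C u₀)² + (u₁)²)(u₁ C u₀ − 1)⁻¹. Then for all n ∈ ℤ the linear recursion relations with constant coefficients hold: u_{n+2} C − u_{n+1} K + u_n = 0 and u_{n+2} − K u_{n+1} + C u_n = 0. Moreover: if the initial data are x = C R₀, y = R₁ (i.e. C = x y x⁻¹ y⁻¹, R₀ = y x y⁻¹, R₁ = y, hence u₀ = y x y⁻¹ and u₁ = (1+y) x⁻¹), then K = (x² + ((1+y) x⁻¹)²) y⁻¹; and if the initial data are X = C R₁, Y = R₂ (i.e. C = X Y X⁻¹ Y⁻¹, R₁ = Y X Y⁻¹, R₂ = Y), then K = (Y² + ((1+X) Y⁻¹)²) Y X⁻¹ Y⁻¹. -/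

import Mathlib

/-- A solution of the non-commutative `(1,4)`-system with commutator `C`. -/
def IsOneFourSolution {D : Type*} [DivisionRing D] (R : ℤ → Dˣ) (C : Dˣ) : Prop :=
  (∀ n : ℤ, (C : D) =
      (((R (n + 1))⁻¹ : Dˣ) : D) * (R n : D) * (R (n + 1) : D) * (((R n)⁻¹ : Dˣ) : D)) ∧
  (∀ n : ℤ, (R (2 * n) : D) * (C : D) * (R (2 * n - 2) : D) = 1 + (R (2 * n - 1) : D)) ∧
  (∀ n : ℤ, (R (2 * n + 1) : D) * (C : D) * (R (2 * n - 1) : D) = 1 + (R (2 * n) : D) ^ 4)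

set_option maxHeartbeats 2000000 in
/-- One step of the `(1,4)`-system: the two local linear recursions and the
invariance of `K`. Here `a = u_n`, `b = u_{n+1}`, `c = u_{n+2}`, `d = w_{n+1} = R_{2n+1}`,
`e = w_{n+2} = R_{2n+3}`, and `cI, dI, eI` are the inverses of `C, d, e`. -/
theorem onefour_step {D : Type*} [DivisionRing D] (C a b c d e cI dI eI : D)
    (hC1 : C*cI = 1) (hC2 : cI*C = 1) (hd1 : d*dI = 1) (hd2 : dI*d = 1) (he1 : e*eI = 1)
    (hb0 : b ≠ 0) (hCa0 : C*a ≠ 0) (hCb0 : C*b ≠ 0) (hCd0 : C*d ≠ 0)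
    (hA : d*C*a = a*d) (hB : b*C*d = d*b) (hA' : e*C*b = b*e) (hB' : c*C*e = e*c)
    (hii : b*C*a = 1 + d) (hii' : c*C*b = 1 + e) (hiii : e*C*d = 1 + b^4) :
    (c*C - b*(((C*a)^2 + b^2)*dI) + a = 0) ∧
    (c - (((C*a)^2 + b^2)*dI)*b + C*a = 0) ∧
    (((C*b)^2 + c^2)*eI = ((C*a)^2 + b^2)*dI) := by
  have hd : d = b*C*a - 1 := by rw [hii]; noncomm_ring
  have he : e = c*C*b - 1 := by rw [hii']; noncomm_ring
  have hE : a*b = b*C*a - 1 + cI := by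
    apply mul_right_cancel₀ hCa0
    calc a*b*(C*a) = a*(b*C*a) := by noncomm_ring
      _ = a*(1 + d) := by rw [hii]
      _ = a + a*d := by noncomm_ring
      _ = a + d*C*a := by rw [← hA]
      _ = a + (1 + d)*(C*a) - C*a := by noncomm_ring
      _ = a + (b*C*a)*(C*a) - C*a := by rw [← hii]
      _ = b*C*a*(C*a) - C*a + (cI*C)*a := by rw [hC2]; noncomm_ring
      _ = (b*C*a - 1 + cI)*(C*a) := by noncomm_ring
  have hE' : b*c = c*C*b - 1 + cI := by
    apply mul_right_cancel₀ hCb0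
    calc b*c*(C*b) = b*(c*C*b) := by noncomm_ring
      _ = b*(1 + e) := by rw [hii']
      _ = b + b*e := by noncomm_ring
      _ = b + e*C*b := by rw [← hA']
      _ = b + (1 + e)*(C*b) - C*b := by noncomm_ring
      _ = b + (c*C*b)*(C*b) - C*b := by rw [← hii']
      _ = c*C*b*(C*b) - C*b + (cI*C)*b := by rw [hC2]; noncomm_ring
      _ = (c*C*b - 1 + cI)*(C*b) := by noncomm_ring
  have hdag : c*C*d*b = 1 + b^4 + C*d := by
    calc c*C*d*b = c*C*(d*b) := by noncomm_ring
      _ = c*C*(b*C*d) := by rw [← hB]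
      _ = (c*C*b)*(C*d) := by noncomm_ring
      _ = (1 + e)*(C*d) := by rw [hii']
      _ = e*C*d + C*d := by noncomm_ring
      _ = (1 + b^4) + C*d := by rw [hiii]
      _ = 1 + b^4 + C*d := by noncomm_ring
  have h1 : a*d = b*C*a*(C*a) - C*a := by
    rw [← hA, hd]; noncomm_ring
  have G1 : (c*C + a)*d = b*((C*a)^2 + b^2) := by
    apply mul_right_cancel₀ hb0
    calc (c*C + a)*d*b = c*C*d*b + a*d*b := by noncomm_ring
      _ = (1 + b^4 + C*d) + (b*C*a*(C*a) - C*a)*b := by rw [hdag, h1]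
      _ = 1 + b^4 + C*d + b*C*a*(C*a)*b - C*(a*b) := by noncomm_ring
      _ = 1 + b^4 + C*(b*C*a - 1) + b*C*a*(C*a)*b - C*(b*C*a - 1 + cI) := by rw [hd, hE]
      _ = b*C*a*(C*a)*b + b^4 + (1 - C*cI) := by noncomm_ring
      _ = b*C*a*(C*a)*b + b^4 + (1 - 1) := by rw [hC1]
      _ = b*((C*a)^2 + b^2)*b := by noncomm_ring
  have hbK : b*(((C*a)^2 + b^2)*dI) = c*C + a := by
    calc b*(((C*a)^2 + b^2)*dI) = (b*((C*a)^2 + b^2))*dI := by noncomm_ring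
      _ = ((c*C + a)*d)*dI := by rw [G1]
      _ = (c*C + a)*(d*dI) := by noncomm_ring
      _ = (c*C + a)*1 := by rw [hd1]
      _ = c*C + a := mul_one _
  have out1 : c*C - b*(((C*a)^2 + b^2)*dI) + a = 0 := by rw [hbK]; noncomm_ring
  have hw : d = a*b - cI := by rw [hE, hd]; noncomm_ring
  have G2 : ((C*a)^2 + b^2)*b = (c + C*a)*(C*d) := by
    apply mul_right_cancel₀ hb0
    symm
    calc ((c + C*a)*(C*d))*b = c*C*d*b + C*a*C*d*b := by noncomm_ring
      _ = (1 + b^4 + C*d) + C*a*C*d*b := by rw [hdag]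
      _ = 1 + b^4 + C*(a*b - cI) + C*a*C*((a*b - cI)*b) := by rw [hw]; noncomm_ring
      _ = 1 + b^4 + C*(a*b) - C*cI + C*a*C*(a*b)*b - C*a*((C*cI)*b) := by noncomm_ring
      _ = 1 + b^4 + C*(a*b) - 1 + C*a*C*(a*b)*b - C*a*(1*b) := by rw [hC1]
      _ = (((C*a)^2 + b^2)*b)*b := by noncomm_ring
  have hdIb : dI*b = b*(dI*cI) := by
    apply mul_right_cancel₀ hCd0
    have L : dI*b*(C*d) = b := by
      calc dI*b*(C*d) = dI*(b*C*d) := by noncomm_ring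
        _ = dI*(d*b) := by rw [hB]
        _ = (dI*d)*b := by noncomm_ring
        _ = 1*b := by rw [hd2]
        _ = b := one_mul _
    have Rr : (b*(dI*cI))*(C*d) = b := by
      calc (b*(dI*cI))*(C*d) = b*(dI*((cI*C)*d)) := by noncomm_ring
        _ = b*(dI*(1*d)) := by rw [hC2]
        _ = b*(dI*d) := by rw [one_mul]
        _ = b*1 := by rw [hd2]
        _ = b := mul_one _
    exact L.trans Rr.symm
  have hKb : (((C*a)^2 + b^2)*dI)*b = c + C*a := by
    calc (((C*a)^2 + b^2)*dI)*b = ((C*a)^2 + b^2)*(dI*b) := by noncomm_ring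
      _ = ((C*a)^2 + b^2)*(b*(dI*cI)) := by rw [hdIb]
      _ = (((C*a)^2 + b^2)*b)*(dI*cI) := by noncomm_ring
      _ = ((c + C*a)*(C*d))*(dI*cI) := by rw [G2]
      _ = (c + C*a)*(C*(d*dI)*cI) := by noncomm_ring
      _ = (c + C*a)*(C*1*cI) := by rw [hd1]
      _ = (c + C*a)*(C*cI) := by rw [mul_one]
      _ = (c + C*a)*1 := by rw [hC1]
      _ = c + C*a := mul_one _
  have out2 : c - (((C*a)^2 + b^2)*dI)*b + C*a = 0 := by rw [hKb]; noncomm_ring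
  have hdK : d*(((C*a)^2 + b^2)*dI) = a*a + b*C*(b*C) := by
    calc d*(((C*a)^2 + b^2)*dI) = (d*C*a*(C*a) + d*b*b)*dI := by noncomm_ring
      _ = ((a*d)*(C*a) + (b*C*d)*b)*dI := by rw [hA, ← hB]
      _ = (a*(d*C*a) + b*C*(d*b))*dI := by noncomm_ring
      _ = (a*(a*d) + b*C*(b*C*d))*dI := by rw [hA, ← hB]
      _ = a*a*(d*dI) + b*C*(b*C)*(d*dI) := by noncomm_ring
      _ = a*a*1 + b*C*(b*C)*1 := by rw [hd1]
      _ = a*a + b*C*(b*C) := by noncomm_ring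
  have hc : c = (((C*a)^2 + b^2)*dI)*b - C*a := by rw [hKb]; noncomm_ring
  have hdc : d*c = a*a*b + b*C*(b*C)*b - a*d := by
    calc d*c = d*((((C*a)^2 + b^2)*dI)*b - C*a) := by rw [← hc]
      _ = (d*(((C*a)^2 + b^2)*dI))*b - d*C*a := by noncomm_ring
      _ = (a*a + b*C*(b*C))*b - a*d := by rw [hdK, hA]
      _ = a*a*b + b*C*(b*C)*b - a*d := by noncomm_ring
  have hab : a*b = d + cI := by rw [hE, hd]
  have hw' : e = b*c - cI := by rw [hE', he]; noncomm_ring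
  have G3 : b*((C*b)^2 + c^2) = (c*C + a)*e := by
    symm
    calc (c*C + a)*e = c*C*e + a*e := by noncomm_ring
      _ = e*c + a*e := by rw [hB']
      _ = (b*c - cI)*c + a*(b*c - cI) := by rw [hw']
      _ = b*c*c - cI*c + (a*b)*c - a*cI := by noncomm_ring
      _ = b*c*c - cI*c + (d + cI)*c - a*cI := by rw [hab]
      _ = b*c*c + d*c - a*cI := by noncomm_ring
      _ = b*c*c + (a*a*b + b*C*(b*C)*b - a*d) - a*cI := by rw [hdc]
      _ = b*c*c + b*C*(b*C)*b + a*(a*b) - a*(d + cI) := by noncomm_ring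
      _ = b*c*c + b*C*(b*C)*b + a*(d + cI) - a*(d + cI) := by rw [hab]
      _ = b*((C*b)^2 + c^2) := by noncomm_ring
  have bK' : b*(((C*b)^2 + c^2)*eI) = c*C + a := by
    calc b*(((C*b)^2 + c^2)*eI) = (b*((C*b)^2 + c^2))*eI := by noncomm_ring
      _ = ((c*C + a)*e)*eI := by rw [G3]
      _ = (c*C + a)*(e*eI) := by noncomm_ring
      _ = (c*C + a)*1 := by rw [he1]
      _ = c*C + a := mul_one _
  have out3 : ((C*b)^2 + c^2)*eI = ((C*a)^2 + b^2)*dI :=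
    mul_left_cancel₀ hb0 (bK'.trans hbK.symm)
  exact ⟨out1, out2, out3⟩

set_option maxHeartbeats 1000000 in
/-- For the `(1,4)`-system, with `u_n := R_{2n}` and
`K := ((C u₀)² + u₁²)(u₁ C u₀ − 1)⁻¹`, the linear recursions
`u_{n+2} C − u_{n+1} K + u_n = 0` and `u_{n+2} − K u_{n+1} + C u_n = 0` hold; moreover
for initial data `x = C R₀`, `y = R₁` one has `K = (x² + ((1+y) x⁻¹)²) y⁻¹`, and for
initial data `X = C R₁`, `Y = R₂` one has `K = (Y² + ((1+X) Y⁻¹)²) Y X⁻¹ Y⁻¹`. -/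
theorem onefour_linear_recursions {D : Type*} [DivisionRing D] (R : ℤ → Dˣ) (C : Dˣ)
    (h : IsOneFourSolution R C) :
    let K : D := (((C : D) * (R 0 : D)) ^ 2 + (R 2 : D) ^ 2) *
      ((R 2 : D) * (C : D) * (R 0 : D) - 1)⁻¹
    (∀ n : ℤ, (R (2 * (n + 2)) : D) * (C : D) - (R (2 * (n + 1)) : D) * K +
        (R (2 * n) : D) = 0) ∧
    (∀ n : ℤ, (R (2 * (n + 2)) : D) - K * (R (2 * (n + 1)) : D) +
        (C : D) * (R (2 * n) : D) = 0) ∧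
    (∀ x y : Dˣ, C = x * y * x⁻¹ * y⁻¹ → R 0 = y * x * y⁻¹ → R 1 = y →
        K = ((x : D) ^ 2 + ((1 + (y : D)) * ((x⁻¹ : Dˣ) : D)) ^ 2) * ((y⁻¹ : Dˣ) : D)) ∧
    (∀ X Y : Dˣ, C = X * Y * X⁻¹ * Y⁻¹ → R 1 = Y * X * Y⁻¹ → R 2 = Y →
        K = ((Y : D) ^ 2 + ((1 + (X : D)) * ((Y⁻¹ : Dˣ) : D)) ^ 2) *
          (Y : D) * ((X⁻¹ : Dˣ) : D) * ((Y⁻¹ : Dˣ) : D)) := by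
  obtain ⟨h1, h2, h3⟩ := h
  intro K
  have hKdef : K = (((C : D) * (R 0 : D)) ^ 2 + (R 2 : D) ^ 2) *
      ((R 2 : D) * (C : D) * (R 0 : D) - 1)⁻¹ := rfl
  -- the commutation relation
  have hstar : ∀ k : ℤ, (R (k+1) : D) * C * R k = (R k : D) * R (k+1) := by
    intro k
    have hCu : (C : Dˣ) = (R (k+1))⁻¹ * R k * R (k+1) * (R k)⁻¹ :=
      Units.ext (by simp only [Units.val_mul]; exact h1 k)
    have hu : R (k+1) * C * R k = R k * R (k+1) := by rw [hCu]; group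
    have := congrArg (Units.val) hu
    simpa only [Units.val_mul] using this
  have h2' : ∀ n : ℤ, (R (2*n+2) : D) * C * R (2*n) = 1 + (R (2*n+1) : D) := by
    intro n
    have t := h2 (n+1)
    rw [show 2*(n+1) = 2*n+2 by ring, show 2*n+2-2 = 2*n by ring,
      show 2*n+2-1 = 2*n+1 by ring] at t
    exact t
  have h3' : ∀ n : ℤ, (R (2*n+3) : D) * C * R (2*n+1) = 1 + (R (2*n+2) : D)^4 := by
    intro n
    have t := h3 (n+1)
    rw [show 2*(n+1)+1 = 2*n+3 by ring, show 2*(n+1)-1 = 2*n+1 by ring,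
      show 2*(n+1) = 2*n+2 by ring] at t
    exact t
  have step : ∀ n : ℤ,
      ((R (2*n+4) : D)*C - (R (2*n+2) : D)*((((C:D)*(R (2*n):D))^2 + ((R (2*n+2):D))^2) *
        (((R (2*n+1))⁻¹ : Dˣ) : D)) + (R (2*n) : D) = 0) ∧
      ((R (2*n+4) : D) - ((((C:D)*(R (2*n):D))^2 + ((R (2*n+2):D))^2) *
        (((R (2*n+1))⁻¹ : Dˣ) : D))*(R (2*n+2) : D) + (C:D)*(R (2*n) : D) = 0) ∧
      ((((C:D)*(R (2*n+2):D))^2 + ((R (2*n+4):D))^2) * (((R (2*n+3))⁻¹ : Dˣ) : D) =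
        (((C:D)*(R (2*n):D))^2 + ((R (2*n+2):D))^2) * (((R (2*n+1))⁻¹ : Dˣ) : D)) := by
    intro n
    have hB := hstar (2*n+1)
    rw [show 2*n+1+1 = 2*n+2 by ring] at hB
    have hA' := hstar (2*n+2)
    rw [show 2*n+2+1 = 2*n+3 by ring] at hA'
    have hB' := hstar (2*n+3)
    rw [show 2*n+3+1 = 2*n+4 by ring] at hB'
    have hii' := h2' (n+1)
    rw [show 2*(n+1)+2 = 2*n+4 by ring, show 2*(n+1)+1 = 2*n+3 by ring,
      show 2*(n+1) = 2*n+2 by ring] at hii'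
    exact onefour_step (C:D) (R (2*n)) (R (2*n+2)) (R (2*n+4)) (R (2*n+1)) (R (2*n+3))
      ((C⁻¹ : Dˣ)) (((R (2*n+1))⁻¹ : Dˣ)) (((R (2*n+3))⁻¹ : Dˣ))
      (Units.mul_inv C) (Units.inv_mul C) (Units.mul_inv _) (Units.inv_mul _)
      (Units.mul_inv _)
      (Units.ne_zero _)
      (by rw [← Units.val_mul]; exact Units.ne_zero _)
      (by rw [← Units.val_mul]; exact Units.ne_zero _)
      (by rw [← Units.val_mul]; exact Units.ne_zero _)
      (hstar (2*n)) hB hA' hB' (h2' n) hii' (h3' n)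
  have hconst : ∀ n : ℤ,
      (((C:D)*(R (2*(n+1)):D))^2 + ((R (2*(n+1)+2):D))^2) * (((R (2*(n+1)+1))⁻¹ : Dˣ) : D) =
      (((C:D)*(R (2*n):D))^2 + ((R (2*n+2):D))^2) * (((R (2*n+1))⁻¹ : Dˣ) : D) := by
    intro n
    rw [show 2*(n+1)+2 = 2*n+4 by ring, show 2*(n+1)+1 = 2*n+3 by ring,
      show 2*(n+1) = 2*n+2 by ring]
    exact (step n).2.2
  have hKn0 : ∀ n : ℤ,
      (((C:D)*(R (2*n):D))^2 + ((R (2*n+2):D))^2) * (((R (2*n+1))⁻¹ : Dˣ) : D) =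
      (((C:D)*(R (2*0):D))^2 + ((R (2*0+2):D))^2) * (((R (2*0+1))⁻¹ : Dˣ) : D) := by
    intro n
    induction n using Int.induction_on with
    | zero => rfl
    | succ k ih => rw [hconst k]; exact ih
    | pred k ih =>
      have t := hconst (-(k:ℤ) - 1)
      rw [show (-(k:ℤ) - 1) + 1 = -(k:ℤ) by ring] at t
      rw [← t]; exact ih
  have h21 : (R 2 : D) * C * R 0 = 1 + (R 1 : D) := by
    have t := h2' 0
    norm_num at t
    exact t
  have hKeq : K = (((C:D)*(R (2*0):D))^2 + ((R (2*0+2):D))^2) * (((R (2*0+1))⁻¹ : Dˣ) : D) := by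
    rw [hKdef, show (R 2 : D) * (C:D) * (R 0 : D) - 1 = ((R 1 : Dˣ) : D) by
        rw [h21]; noncomm_ring,
      ← Units.val_inv_eq_inv_val]
    norm_num
  refine ⟨?_, ?_, ?_, ?_⟩
  · intro n
    rw [show 2*(n+2) = 2*n+4 by ring, show 2*(n+1) = 2*n+2 by ring, hKeq, ← hKn0 n]
    exact (step n).1
  · intro n
    rw [show 2*(n+2) = 2*n+4 by ring, show 2*(n+1) = 2*n+2 by ring, hKeq, ← hKn0 n]
    exact (step n).2.1
  · intro x y hC0 hR0 hR1
    have hCR0 : C * R 0 = x := by rw [hC0, hR0]; group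
    have hCR0D : (C : D) * (R 0 : D) = (x : D) := by
      rw [← Units.val_mul, hCR0]
    have hx : (R 2 : D) * (x : D) = 1 + (y : D) := by
      have t : (R 2 : D) * ((C : D) * (R 0 : D)) = 1 + (y : D) := by
        rw [← mul_assoc, h21, hR1]
      rwa [hCR0D] at t
    have hR2 : (R 2 : D) = (1 + (y : D)) * ((x⁻¹ : Dˣ) : D) := by
      calc (R 2 : D) = (R 2 : D) * (x : D) * ((x⁻¹ : Dˣ) : D) := by
            rw [Units.mul_inv_cancel_right]
        _ = (1 + (y : D)) * ((x⁻¹ : Dˣ) : D) := by rw [hx]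
    rw [hKdef, show (R 2 : D) * (C:D) * (R 0 : D) - 1 = ((R 1 : Dˣ) : D) by
        rw [h21]; noncomm_ring,
      ← Units.val_inv_eq_inv_val, hR1, hCR0D, hR2]
  · intro X Y hC0 hR1 hR2
    have hCR0D : (C : D) * (R 0 : D) = (1 + (X : D)) * ((Y⁻¹ : Dˣ) : D) := by
      apply mul_left_cancel₀ (Units.ne_zero Y)
      calc (Y : D) * ((C : D) * (R 0 : D)) = (R 2 : D) * ((C : D) * (R 0 : D)) := by
            rw [hR2]
        _ = (R 2 : D) * (C : D) * (R 0 : D) := by rw [mul_assoc]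
        _ = 1 + (R 1 : D) := h21
        _ = 1 + (Y : D) * (X : D) * ((Y⁻¹ : Dˣ) : D) := by
            rw [hR1, Units.val_mul, Units.val_mul]
        _ = (Y : D) * ((1 + (X : D)) * ((Y⁻¹ : Dˣ) : D)) := by
            rw [add_mul, one_mul, mul_add, Units.mul_inv]; noncomm_ring
    have hR1inv : ((R 1)⁻¹ : Dˣ) = Y * X⁻¹ * Y⁻¹ := by rw [hR1]; group
    rw [hKdef, show (R 2 : D) * (C:D) * (R 0 : D) - 1 = ((R 1 : Dˣ) : D) by
        rw [h21]; noncomm_ring,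
      ← Units.val_inv_eq_inv_val, hR1inv, hCR0D, hR2, Units.val_mul, Units.val_mul]
    noncomm_ring
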